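/- Fix an integer k ≥ 0, sequences φ, μ of nonzero integers, and nonnegative integers k_i, s_i, g_i for i = 1,…,n. Let P = m_+ ∘ m_1 ∘ ⋯ ∘ m_n ∘ m_−, where m_+ = ∏_{i: μ_i<0} a_{|μ_i|} ∘ ∏_{i: φ_i<0} b_{|φ_i|}, m_− = ∏_{i: μ_i>0} a_{−μ_i} ∘ ∏_{i: φ_i>0} b_{−φ_i}, and each m_i is a normally ordered monomial in the operators a_s, b_s (s nonzero) whose indices sum to −k·s_i and which has exactly k_i + 2 − 2 s_i − g_i factors of b-type. Let G be a Feynman graph for P in which no germ of m_+ is matched with a germ of m_−. Form a decorated graph on the ordered vertex set v_1 < ⋯ < v_n by turning every matched pair of germs at two vertices into a compact edge, and every matched pair consisting of a boundary germ (of m_+ or m_−) and a vertex germ into an end at that vertex; each flag inherits the weight and thickening of its vertex germ, each end is marked by the entry of (φ,μ) indexing its boundary germ, and each vertex v_i carries the decorations (g_i, s_i, k_i). Then: (1) the resulting decorated graph is a possibly disconnected floor diagram for 𝔽_k of degree (φ,μ); (2) its genus equals Σ_{i=1}^n (g_i + h_i − 1) + 1 − ℓ, where h_i is the number of factors of m_i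 with negative index and ℓ is the number of factors of m_+; (3) the weight of G equals ∏_i |φ_i| · ∏_i |μ_i| · ∏_e w(e), the last product running over the compact edges of the diagram; and (4) conversely, every possibly disconnected floor diagram for 𝔽_k of degree (φ,μ) whose i-th vertex carries decorations (g_i, s_i, k_i) arises by this construction from such a P and such a Feynman graph G for it. -/

import Mathlib

/-!  Floor diagrams for the Hirzebruch surface `𝔽_k` of degree `(φ, μ)`.

The underlying data: a graph on the linearly ordered vertex set `Fin n`, with compact
edges indexed by a finite type `E` (each compact edge `e` going from its left endpoint
`src e` to its right endpoint `tgt e`, carrying a weight `w e` and having exactly one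
thickened flag, located at `src e` iff `thickAtSrc e`), and with one end for each entry
of `(φ, μ)` (the end marked by an entry `m` is attached at the vertex `endv`, is
non-thickened for `φ`-entries and thickened for `μ`-entries, has weight `|m|` and points
left iff `m < 0`).  Each vertex `V` carries a genus `gv V`, a size `sv V` and a
ψ-power `kv V`. -/
structure FloorData (n1 n2 : ℕ) where
  n : ℕ
  E : Type
  [fintE : Fintype E]
  [deceqE : DecidableEq E]
  src : E → Fin n
  tgt : E → Fin n
  w : E → ℤ
  thickAtSrc : E → Bool
  endv : Fin n1 ⊕ Fin n2 → Fin n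
  gv : Fin n → ℕ
  sv : Fin n → ℕ
  kv : Fin n → ℕ

attribute [instance] FloorData.fintE FloorData.deceqE

/-- The marking of the ends: the end indexed by `Sum.inl i` is marked by `φ i`
(non-thickened), and the end indexed by `Sum.inr i` is marked by `μ i` (thickened). -/
def fdMark {n1 n2 : ℕ} (φ : Fin n1 → ℤ) (μ : Fin n2 → ℤ) : Fin n1 ⊕ Fin n2 → ℤ :=
  Sum.elim φ μ

/-- The conditions for `D` to be a floor diagram for `𝔽_k` of degree `(φ, μ)`, except
connectedness: all marks are nonzero; compact edges join distinct vertices (left endpoint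
strictly smaller); all weights are positive; at every vertex `V` exactly
`kv V + 2 - 2·sv V - gv V` of the adjacent flags are thickened (the thickened flags at `V`
being the thickened flags of compact edges located at `V` and the thickened (i.e. `μ`-marked)
ends attached at `V`); and at every vertex the signed sum of the weights of the adjacent
edges (negative for edges/ends pointing to the left, positive for those pointing to the
right) equals `-k·sv V`. -/
def IsPreFloorDiagram (k : ℕ) {n1 n2 : ℕ} (φ : Fin n1 → ℤ) (μ : Fin n2 → ℤ)
    (D : FloorData n1 n2) : Prop :=
  (∀ j, fdMark φ μ j ≠ 0) ∧
  (∀ e, D.src e < D.tgt e) ∧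
  (∀ e, 0 < D.w e) ∧
  (∀ V : Fin D.n,
    ((Finset.univ.filter fun e : D.E =>
        (if D.thickAtSrc e then D.src e else D.tgt e) = V).card
      + (Finset.univ.filter fun j : Fin n2 => D.endv (Sum.inr j) = V).card)
      + 2 * D.sv V + D.gv V = D.kv V + 2) ∧
  (∀ V : Fin D.n,
    (∑ e ∈ Finset.univ.filter fun e : D.E => D.src e = V, D.w e)
      - (∑ e ∈ Finset.univ.filter fun e : D.E => D.tgt e = V, D.w e)
      + (∑ j ∈ Finset.univ.filter fun j : Fin n1 ⊕ Fin n2 => D.endv j = V, fdMark φ μ j)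
      = -(k : ℤ) * (D.sv V : ℤ))

/-- A floor diagram: the above, together with connectedness of the underlying graph. -/
def IsFloorDiagram (k : ℕ) {n1 n2 : ℕ} (φ : Fin n1 → ℤ) (μ : Fin n2 → ℤ)
    (D : FloorData n1 n2) : Prop :=
  IsPreFloorDiagram k φ μ D ∧
  (SimpleGraph.fromRel fun u v : Fin D.n => ∃ e, D.src e = u ∧ D.tgt e = v).Connected

/-- The genus of a (possibly disconnected) floor diagram:
`(#compact edges - #vertices + 1) + Σ_V gv V`; for a connected diagram the first summand
is the first Betti number of the underlying graph. -/
noncomputable def FloorData.genus {n1 n2 : ℕ} (D : FloorData n1 n2) : ℤ :=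
  (Fintype.card D.E : ℤ) - (D.n : ℤ) + 1 + ∑ V, (D.gv V : ℤ)

/-! Feynman graphs for products `P = m_+ ∘ m_1 ∘ ⋯ ∘ m_n ∘ m_-` of the specific shape of
Statement 8.  A monomial in the Heisenberg generators `a_s`, `b_s` is encoded by a list of
pairs `(t, s)`, where `t = true` stands for an `a`-type factor (non-thickened) and
`t = false` for a `b`-type factor (thickened), and `s` is the index.  The boundary monomials
are `m_+ = ∏_{μ i < 0} a_{|μ i|} ∘ ∏_{φ i < 0} b_{|φ i|}` and
`m_- = ∏_{μ i > 0} a_{-μ i} ∘ ∏_{φ i > 0} b_{-φ i}`, so their germs are indexed by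
`Fin n1 ⊕ Fin n2`: the germ indexed by `j` has index `-(mark j)`, lies in block `0` (i.e.
in `m_+`) if `mark j < 0` and in block `n+1` (i.e. in `m_-`) if `mark j > 0`, and is of
`b`-type for `φ`-germs and `a`-type for `μ`-germs.  The interior monomial `m_i` is given
by the list `l i`, its germs being attached to the vertex `v_i`, which forms block `i+1`. -/

/-- The germs of the product `P` determined by `(φ, μ)` and the interior monomials `l`. -/
abbrev PGerm (n1 n2 n : ℕ) (l : Fin n → List (Bool × ℤ)) : Type :=
  (Fin n1 ⊕ Fin n2) ⊕ (Σ i : Fin n, Fin ((l i).length))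

/-- The index of the factor corresponding to a germ (positive = right-directed,
negative = left-directed; the weight of the germ is the absolute value). -/
def pidx {n1 n2 n : ℕ} (φ : Fin n1 → ℤ) (μ : Fin n2 → ℤ)
    (l : Fin n → List (Bool × ℤ)) : PGerm n1 n2 n l → ℤ
  | .inl j => -(fdMark φ μ j)
  | .inr ip => ((l ip.1).get ip.2).2

/-- Whether a germ is of `a`-type (`true`, non-thickened) or `b`-type (`false`, thickened). -/
def ptypA {n1 n2 n : ℕ} (l : Fin n → List (Bool × ℤ)) : PGerm n1 n2 n l → Bool
  | .inl (.inl _) => false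
  | .inl (.inr _) => true
  | .inr ip => ((l ip.1).get ip.2).1

/-- The block of a germ: `0` for germs of `m_+`, `i+1` for germs of `m_i`,
`n+1` for germs of `m_-`. -/
def pblk {n1 n2 n : ℕ} (φ : Fin n1 → ℤ) (μ : Fin n2 → ℤ)
    (l : Fin n → List (Bool × ℤ)) : PGerm n1 n2 n l → ℕ
  | .inl j => if fdMark φ μ j < 0 then 0 else n + 1
  | .inr ip => (ip.1 : ℕ) + 1

/-- The vertex at which an interior germ is attached (junk value `0` for boundary germs). -/
def pvtx {n1 n2 n : ℕ} (l : Fin n → List (Bool × ℤ)) : PGerm n1 n2 n l → ℕ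
  | .inl _ => 0
  | .inr ip => (ip.1 : ℕ)

/-- A Feynman graph for `P`: a perfect matching (a fixed-point-free involution, encoded by a
function `f` pairing `g` with `f g`) of the germs such that each matched pair consists of a
right-directed germ in a strictly earlier block and a left-directed germ of the same weight
in a strictly later block, exactly one of the two being thickened. -/
def IsPFeynman {n1 n2 n : ℕ} (φ : Fin n1 → ℤ) (μ : Fin n2 → ℤ)
    (l : Fin n → List (Bool × ℤ)) (f : PGerm n1 n2 n l → PGerm n1 n2 n l) : Prop :=
  Function.Involutive f ∧
  ∀ g : PGerm n1 n2 n l,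
    pidx φ μ l (f g) = -(pidx φ μ l g) ∧
    (0 < pidx φ μ l g → pblk φ μ l g < pblk φ μ l (f g)) ∧
    ptypA l (f g) = ! ptypA l g

/-- The compact edges produced by a matching `f`: the matched pairs of two interior germs,
each such pair being recorded by its right-directed (positive-index) germ. -/
abbrev PCEdge {n1 n2 n : ℕ} (φ : Fin n1 → ℤ) (μ : Fin n2 → ℤ)
    (l : Fin n → List (Bool × ℤ)) (f : PGerm n1 n2 n l → PGerm n1 n2 n l) : Type :=
  {g : PGerm n1 n2 n l // g.isRight = true ∧ (f g).isRight = true ∧ 0 < pidx φ μ l g}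

/-- `PMatches φ μ gg ss kk l f D` says that the decorated graph `D` is (isomorphic to) the
decorated graph constructed from the Feynman graph `f`: it has vertex set `Fin n`, the
vertex `v_i` carrying the decorations `(gg i, ss i, kk i)`; its compact edges correspond to
the matched pairs of interior germs of `f`, with endpoints the vertices of the two germs
(left endpoint at the right-directed germ), weight the common weight of the pair, and
thickened flag on the side of the thickened (`b`-type) germ; and its end marked by the
entry `j` of `(φ, μ)` is attached at the vertex of the interior germ matched with the
boundary germ `j` (each flag inheriting the weight and thickening of its vertex germ). -/
def PMatches {n1 n2 n : ℕ} (φ : Fin n1 → ℤ) (μ : Fin n2 → ℤ)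
    (gg ss kk : Fin n → ℕ) (l : Fin n → List (Bool × ℤ))
    (f : PGerm n1 n2 n l → PGerm n1 n2 n l) (D : FloorData n1 n2) : Prop :=
  ∃ hn : D.n = n,
    (∀ i : Fin n, D.gv (Fin.cast hn.symm i) = gg i ∧
      D.sv (Fin.cast hn.symm i) = ss i ∧ D.kv (Fin.cast hn.symm i) = kk i) ∧
    (∀ j : Fin n1 ⊕ Fin n2, ((D.endv j : ℕ) = pvtx l (f (Sum.inl j)))) ∧
    ∃ eq : PCEdge φ μ l f ≃ D.E,
      ∀ e : PCEdge φ μ l f,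
        ((D.src (eq e) : ℕ) = pvtx l e.val) ∧
        ((D.tgt (eq e) : ℕ) = pvtx l (f e.val)) ∧
        (D.w (eq e) = pidx φ μ l e.val) ∧
        (D.thickAtSrc (eq e) = ! ptypA l e.val)


namespace FGFD

variable {n1 n2 n : ℕ} (φ : Fin n1 → ℤ) (μ : Fin n2 → ℤ)
  (l : Fin n → List (Bool × ℤ))

/-- Interior germs. -/
abbrev IG := Σ i : Fin n, Fin ((l i).length)

/-- Germ data: (type, index). -/
def gdat (ip : IG l) : Bool × ℤ := (l ip.1).get ip.2

variable (f : PGerm n1 n2 n l → PGerm n1 n2 n l)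

/-- Classification target: src-side edge germs, tgt-side edge germs, end germs. -/
abbrev TT := PCEdge φ μ l f ⊕ PCEdge φ μ l f ⊕ (Fin n1 ⊕ Fin n2)

variable (hnomix : ∀ j : Fin n1 ⊕ Fin n2, (f (Sum.inl j)).isRight = true)

/-- The classification map. -/
def gam : TT φ μ l f → IG l
  | .inl e => e.val.getRight e.prop.1
  | .inr (.inl e) => (f e.val).getRight e.prop.2.1
  | .inr (.inr j) => (f (.inl j)).getRight (hnomix j)

lemma inr_gam_inl (e : PCEdge φ μ l f) :
    Sum.inr (gam φ μ l f hnomix (.inl e)) = e.val := Sum.inr_getRight _ _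

lemma inr_gam_inrl (e : PCEdge φ μ l f) :
    Sum.inr (gam φ μ l f hnomix (.inr (.inl e))) = f e.val := Sum.inr_getRight _ _

lemma inr_gam_inrr (j : Fin n1 ⊕ Fin n2) :
    Sum.inr (gam φ μ l f hnomix (.inr (.inr j))) = f (.inl j) := Sum.inr_getRight _ _

lemma gdat_eq (ip : IG l) :
    gdat l ip = (ptypA l (Sum.inr ip : PGerm n1 n2 n l),
      pidx φ μ l (Sum.inr ip : PGerm n1 n2 n l)) := rfl

lemma pidx_ig_ne (hnz : ∀ i, ∀ p ∈ l i, p.2 ≠ 0) (ip : IG l) :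
    pidx φ μ l (Sum.inr ip : PGerm n1 n2 n l) ≠ 0 :=
  hnz ip.1 _ (List.get_mem _ _)

lemma gam_bijective (hf : IsPFeynman φ μ l f) (hnz : ∀ i, ∀ p ∈ l i, p.2 ≠ 0) :
    Function.Bijective (gam φ μ l f hnomix) := by
  obtain ⟨hinv, hprop⟩ := hf
  have finj : Function.Injective f := hinv.injective
  constructor
  · intro x y hxy
    have h2 : (Sum.inr (gam φ μ l f hnomix x) : PGerm n1 n2 n l)
        = Sum.inr (gam φ μ l f hnomix y) := by rw [hxy]
    rcases x with e | e | j <;> rcases y with e' | e' | j' <;>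
      simp only [inr_gam_inl, inr_gam_inrl, inr_gam_inrr] at h2
    · exact congrArg Sum.inl (Subtype.ext h2)
    · exfalso
      have h1 := e.prop.2.2
      have h3 := (hprop e'.val).1
      rw [← h2] at h3
      have h4 := e'.prop.2.2
      omega
    · exfalso
      have h5 : f e.val = Sum.inl j' := by rw [h2, hinv]
      have h6 := e.prop.2.1
      rw [h5] at h6
      exact absurd h6 (by simp)
    · exfalso
      have h1 := e'.prop.2.2
      have h3 := (hprop e.val).1
      rw [h2] at h3
      have h4 := e.prop.2.2
      omega
    · exact congrArg (Sum.inr ∘ Sum.inl) (Subtype.ext (finj h2))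
    · exfalso
      have h5 : e.val = Sum.inl j' := finj h2
      have h6 := e.prop.1
      rw [h5] at h6
      exact absurd h6 (by simp)
    · exfalso
      have h5 : f e'.val = Sum.inl j := by rw [← h2, hinv]
      have h6 := e'.prop.2.1
      rw [h5] at h6
      exact absurd h6 (by simp)
    · exfalso
      have h5 : e'.val = Sum.inl j := (finj h2).symm
      have h6 := e'.prop.1
      rw [h5] at h6
      exact absurd h6 (by simp)
    · exact congrArg (Sum.inr ∘ Sum.inr) (Sum.inl.inj (finj h2))
  · intro g
    have hne := pidx_ig_ne φ μ l hnz g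
    rcases hfg : f (Sum.inr g) with j | ip'
    · refine ⟨.inr (.inr j), ?_⟩
      apply Sum.inr_injective (β := IG l)
      rw [inr_gam_inrr, ← hfg, hinv]
    · by_cases hpos : 0 < pidx φ μ l (.inr g)
      · refine ⟨.inl ⟨Sum.inr g, rfl, by rw [hfg]; rfl, hpos⟩, ?_⟩
        apply Sum.inr_injective (β := IG l)
        rw [inr_gam_inl]
      · have hneg : pidx φ μ l (.inr g) < 0 := by omega
        have hpos' : 0 < pidx φ μ l (f (Sum.inr g)) := by
          rw [(hprop (Sum.inr g)).1]; omega
        refine ⟨.inr (.inl ⟨f (Sum.inr g), by rw [hfg]; rfl,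
          by rw [hinv]; rfl, hpos'⟩), ?_⟩
        apply Sum.inr_injective (β := IG l)
        rw [inr_gam_inrl, hinv]


noncomputable def gamEquiv (hf : IsPFeynman φ μ l f)
    (hnz : ∀ i, ∀ p ∈ l i, p.2 ≠ 0) : TT φ μ l f ≃ IG l :=
  Equiv.ofBijective _ (gam_bijective φ μ l f hnomix hf hnz)

@[to_additive]
lemma prod_ig {M : Type} [CommMonoid M] (hf : IsPFeynman φ μ l f)
    (hnz : ∀ i, ∀ p ∈ l i, p.2 ≠ 0) (F : IG l → M) :
    ∏ ip : IG l, F ip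
      = ((∏ e : PCEdge φ μ l f, F (gam φ μ l f hnomix (.inl e)))
        * ∏ e : PCEdge φ μ l f, F (gam φ μ l f hnomix (.inr (.inl e))))
        * ∏ j : Fin n1 ⊕ Fin n2, F (gam φ μ l f hnomix (.inr (.inr j))) := by
  rw [← Fintype.prod_equiv (gamEquiv φ μ l f hnomix hf hnz)
    (fun x => F (gamEquiv φ μ l f hnomix hf hnz x)) F (fun x => rfl)]
  rw [Fintype.prod_sum_type, Fintype.prod_sum_type, mul_assoc]
  rfl

lemma gdat_gam_inl (e : PCEdge φ μ l f) :
    gdat l (gam φ μ l f hnomix (.inl e)) = (ptypA l e.val, pidx φ μ l e.val) := by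
  rw [gdat_eq φ μ l, inr_gam_inl]

lemma gdat_gam_inrl (hf : IsPFeynman φ μ l f) (e : PCEdge φ μ l f) :
    gdat l (gam φ μ l f hnomix (.inr (.inl e)))
      = (!ptypA l e.val, -(pidx φ μ l e.val)) := by
  rw [gdat_eq φ μ l, inr_gam_inrl, (hf.2 e.val).1, (hf.2 e.val).2.2]

lemma gdat_gam_inrr (hf : IsPFeynman φ μ l f) (j : Fin n1 ⊕ Fin n2) :
    gdat l (gam φ μ l f hnomix (.inr (.inr j))) = (j.isLeft, fdMark φ μ j) := by
  rw [gdat_eq φ μ l, inr_gam_inrr, (hf.2 _).1, (hf.2 _).2.2]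
  rcases j with j | j <;> simp [ptypA, pidx, fdMark]

lemma sum_ig_list {M : Type} [AddCommMonoid M] (G : Fin n → Bool × ℤ → M) :
    ∑ ip : IG l, G ip.1 (gdat l ip) = ∑ i, ((l i).map (G i)).sum := by
  rw [← Finset.univ_sigma_univ, Finset.sum_sigma]
  refine Finset.sum_congr rfl fun i _ => ?_
  rw [← Fin.sum_univ_getElem ((l i).map (G i))]
  refine Fintype.sum_equiv (finCongr (List.length_map _).symm) _ _ fun p => ?_
  simp [gdat]

lemma count_aux {α : Type} (p : α → Bool) (L : List α) :
    ((L.map fun d => if p d then (1:ℕ) else 0)).sum = (L.filter p).length := by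
  induction L with
  | nil => simp
  | cons a t ih => by_cases h : p a <;> simp [h, ih, List.filter_cons] <;> omega


variable (gg ss kk : Fin n → ℕ)

/-- The floor data built from a Feynman graph. -/
def mkD : FloorData n1 n2 where
  n := n
  E := PCEdge φ μ l f
  src e := (gam φ μ l f hnomix (.inl e)).1
  tgt e := (gam φ μ l f hnomix (.inr (.inl e))).1
  w e := pidx φ μ l e.val
  thickAtSrc e := !(ptypA l e.val)
  endv j := (gam φ μ l f hnomix (.inr (.inr j))).1
  gv := gg
  sv := ss
  kv := kk

lemma cond5_aux (k : ℕ) (hf : IsPFeynman φ μ l f) (hnz : ∀ i, ∀ p ∈ l i, p.2 ≠ 0)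
    (hsum : ∀ i, ((l i).map Prod.snd).sum = -(k : ℤ) * (ss i : ℤ)) (V : Fin n) :
    (∑ e ∈ Finset.univ.filter (fun e : PCEdge φ μ l f =>
        (gam φ μ l f hnomix (.inl e)).1 = V), pidx φ μ l e.val)
      - (∑ e ∈ Finset.univ.filter (fun e : PCEdge φ μ l f =>
        (gam φ μ l f hnomix (.inr (.inl e))).1 = V), pidx φ μ l e.val)
      + (∑ j ∈ Finset.univ.filter (fun j : Fin n1 ⊕ Fin n2 =>
        (gam φ μ l f hnomix (.inr (.inr j))).1 = V), fdMark φ μ j)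
      = -(k : ℤ) * (ss V : ℤ) := by
  have hm := sum_ig φ μ l f hnomix hf hnz
    (fun ip => if ip.1 = V then (gdat l ip).2 else 0)
  simp only [gdat_gam_inl, gdat_gam_inrl φ μ l f hnomix hf,
    gdat_gam_inrr φ μ l f hnomix hf] at hm
  rw [sum_ig_list l (fun i d => if i = V then d.2 else 0)] at hm
  have hL : ∀ i : Fin n, ((l i).map fun d => if i = V then d.2 else (0:ℤ)).sum
      = if i = V then ((l i).map Prod.snd).sum else 0 := by
    intro i
    by_cases h : i = V
    · subst h; simp
    · simp [h]
  rw [Finset.sum_congr rfl (fun i _ => hL i), Finset.sum_ite_eq' Finset.univ V] at hm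
  simp only [Finset.mem_univ, if_true] at hm
  have hneg : ∀ e : PCEdge φ μ l f,
      (if (gam φ μ l f hnomix (.inr (.inl e))).1 = V then -pidx φ μ l e.val else 0)
      = -(if (gam φ μ l f hnomix (.inr (.inl e))).1 = V then pidx φ μ l e.val else 0) := by
    intro e; split <;> simp
  rw [Finset.sum_congr rfl (fun e _ => hneg e)] at hm
  rw [Finset.sum_neg_distrib] at hm
  rw [Finset.sum_filter, Finset.sum_filter, Finset.sum_filter]
  rw [hsum V] at hm
  linarith [hm]


lemma cond4_aux (hf : IsPFeynman φ μ l f) (hnz : ∀ i, ∀ p ∈ l i, p.2 ≠ 0)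
    (hb : ∀ i, ((l i).filter fun p => !p.1).length + 2 * ss i + gg i = kk i + 2)
    (V : Fin n) :
    ((Finset.univ.filter fun e : PCEdge φ μ l f =>
        (if !(ptypA l e.val) then (gam φ μ l f hnomix (.inl e)).1
          else (gam φ μ l f hnomix (.inr (.inl e))).1) = V).card
      + (Finset.univ.filter fun j : Fin n2 =>
        (gam φ μ l f hnomix (.inr (.inr (Sum.inr j)))).1 = V).card)
      + 2 * ss V + gg V = kk V + 2 := by
  have hm := sum_ig φ μ l f hnomix hf hnz
    (fun ip => if ip.1 = V ∧ (gdat l ip).1 = false then (1:ℕ) else 0)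
  simp only [gdat_gam_inl, gdat_gam_inrl φ μ l f hnomix hf,
    gdat_gam_inrr φ μ l f hnomix hf] at hm
  rw [sum_ig_list l (fun i d => if i = V ∧ d.1 = false then (1:ℕ) else 0)] at hm
  -- LHS: the count of b-type germs at V
  have hL : ∀ i : Fin n, ((l i).map fun d =>
      if i = V ∧ d.1 = false then (1:ℕ) else 0).sum
      = if i = V then ((l i).filter fun p => !p.1).length else 0 := by
    intro i
    by_cases h : i = V
    · subst h
      rw [← count_aux (fun d => !d.1) (l i)]
      simp [Bool.not_eq_true']
    · simp [h]
  rw [Finset.sum_congr rfl (fun i _ => hL i), Finset.sum_ite_eq' Finset.univ V] at hm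
  simp only [Finset.mem_univ, if_true] at hm
  -- RHS components
  have h12 : ∀ e : PCEdge φ μ l f,
      ((if (gam φ μ l f hnomix (.inl e)).1 = V ∧ ptypA l e.val = false then (1:ℕ) else 0)
      + (if (gam φ μ l f hnomix (.inr (.inl e))).1 = V ∧ (!ptypA l e.val) = false
          then (1:ℕ) else 0))
      = if (if !(ptypA l e.val) then (gam φ μ l f hnomix (.inl e)).1
          else (gam φ μ l f hnomix (.inr (.inl e))).1) = V then 1 else 0 := by
    intro e
    cases hty : ptypA l e.val <;> simp [hty]
  have h3 : (∑ j : Fin n1 ⊕ Fin n2,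
      if (gam φ μ l f hnomix (.inr (.inr j))).1 = V ∧ j.isLeft = false then (1:ℕ) else 0)
      = (Finset.univ.filter fun j : Fin n2 =>
        (gam φ μ l f hnomix (.inr (.inr (Sum.inr j)))).1 = V).card := by
    rw [Fintype.sum_sum_type]
    have h1 : (∑ a : Fin n1, if (gam φ μ l f hnomix (.inr (.inr (Sum.inl a)))).1 = V ∧
        (Sum.inl a : Fin n1 ⊕ Fin n2).isLeft = false then (1:ℕ) else 0) = 0 := by
      simp
    have h2 : ∀ b : Fin n2, (if (gam φ μ l f hnomix (.inr (.inr (Sum.inr b)))).1 = V ∧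
        (Sum.inr b : Fin n1 ⊕ Fin n2).isLeft = false then (1:ℕ) else 0)
        = if (gam φ μ l f hnomix (.inr (.inr (Sum.inr b)))).1 = V then 1 else 0 := by
      intro b; simp
    rw [h1, zero_add, Finset.sum_congr rfl (fun b _ => h2 b), Finset.card_filter]
  rw [← Finset.sum_add_distrib] at hm
  rw [Finset.sum_congr rfl (fun e _ => h12 e), h3] at hm
  rw [← Finset.card_filter] at hm
  have := hb V
  rw [hm] at this
  exact this


lemma mkD_ispre (k : ℕ) (hφ : ∀ i, φ i ≠ 0) (hμ : ∀ i, μ i ≠ 0)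
    (hf : IsPFeynman φ μ l f) (hnz : ∀ i, ∀ p ∈ l i, p.2 ≠ 0)
    (hsum : ∀ i, ((l i).map Prod.snd).sum = -(k : ℤ) * (ss i : ℤ))
    (hb : ∀ i, ((l i).filter fun p => !p.1).length + 2 * ss i + gg i = kk i + 2) :
    IsPreFloorDiagram k φ μ (mkD φ μ l f hnomix gg ss kk) := by
  refine ⟨?_, ?_, ?_, ?_, ?_⟩
  · intro j; rcases j with j | j
    · exact hφ j
    · exact hμ j
  · intro e
    have hpos := e.prop.2.2
    have hblk := (hf.2 e.val).2.1 hpos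
    rw [← inr_gam_inrl φ μ l f hnomix e, ← inr_gam_inl φ μ l f hnomix e] at hblk
    simp only [pblk] at hblk
    have h2 : ((gam φ μ l f hnomix (.inl e)).1 : ℕ)
        < ((gam φ μ l f hnomix (.inr (.inl e))).1 : ℕ) := by omega
    exact h2
  · intro e; exact e.prop.2.2
  · intro V; exact cond4_aux φ μ l f hnomix gg ss kk hf hnz hb V
  · intro V; exact cond5_aux φ μ l f hnomix ss k hf hnz hsum V

lemma mkD_matches : PMatches φ μ gg ss kk l f (mkD φ μ l f hnomix gg ss kk) := by
  refine ⟨rfl, fun i => ⟨rfl, rfl, rfl⟩, fun j => ?_, Equiv.refl _, fun e => ⟨?_, ?_, rfl, rfl⟩⟩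
  · show ((gam φ μ l f hnomix (.inr (.inr j))).1 : ℕ) = pvtx l (f (Sum.inl j))
    rw [← inr_gam_inrr φ μ l f hnomix j]
    rfl
  · show ((gam φ μ l f hnomix (.inl e)).1 : ℕ) = pvtx l e.val
    rw [← inr_gam_inl φ μ l f hnomix e]
    rfl
  · show ((gam φ μ l f hnomix (.inr (.inl e))).1 : ℕ) = pvtx l (f e.val)
    rw [← inr_gam_inrl φ μ l f hnomix e]
    rfl

include hnomix in
lemma part2_aux (hf : IsPFeynman φ μ l f) (hnz : ∀ i, ∀ p ∈ l i, p.2 ≠ 0) :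
    (Fintype.card (PCEdge φ μ l f) : ℤ) - (n : ℤ) + 1 + ∑ i, (gg i : ℤ)
      = (∑ i, ((gg i : ℤ) + (((l i).filter fun p => decide (p.2 < 0)).length : ℤ) - 1))
        + 1
        - ((Finset.univ.filter fun j : Fin n1 ⊕ Fin n2 => fdMark φ μ j < 0).card : ℤ) := by
  have hm := sum_ig φ μ l f hnomix hf hnz
    (fun ip => if (gdat l ip).2 < 0 then (1:ℕ) else 0)
  simp only [gdat_gam_inl, gdat_gam_inrl φ μ l f hnomix hf,
    gdat_gam_inrr φ μ l f hnomix hf] at hm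
  rw [sum_ig_list l (fun _ d => if d.2 < 0 then (1:ℕ) else 0)] at hm
  have hL : ∀ i : Fin n, ((l i).map fun d => if d.2 < 0 then (1:ℕ) else 0).sum
      = ((l i).filter fun p => decide (p.2 < 0)).length := by
    intro i
    rw [← count_aux (fun d => decide (d.2 < 0)) (l i)]
    simp
  rw [Finset.sum_congr rfl (fun i _ => hL i)] at hm
  have h1 : (∑ e : PCEdge φ μ l f, if pidx φ μ l e.val < 0 then (1:ℕ) else 0) = 0 := by
    refine Finset.sum_eq_zero fun e _ => ?_
    have := e.prop.2.2
    rw [if_neg]; omega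
  have h2 : (∑ e : PCEdge φ μ l f, if -pidx φ μ l e.val < 0 then (1:ℕ) else 0)
      = Fintype.card (PCEdge φ μ l f) := by
    have hone : ∀ e : PCEdge φ μ l f, (if -pidx φ μ l e.val < 0 then (1:ℕ) else 0) = 1 := by
      intro e
      have := e.prop.2.2
      rw [if_pos]
      omega
    rw [Finset.sum_congr rfl fun e _ => hone e]
    exact Fintype.card_eq_sum_ones.symm
  have h3 : (∑ j : Fin n1 ⊕ Fin n2, if fdMark φ μ j < 0 then (1:ℕ) else 0)
      = (Finset.univ.filter fun j : Fin n1 ⊕ Fin n2 => fdMark φ μ j < 0).card := by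
    rw [Finset.card_filter]
  rw [h1, h2, h3, zero_add] at hm
  have hexp : (∑ i, ((gg i : ℤ) + (((l i).filter fun p => decide (p.2 < 0)).length : ℤ) - 1))
      = (∑ i, (gg i : ℤ)) + (∑ i, (((l i).filter fun p => decide (p.2 < 0)).length : ℤ))
        - (n : ℤ) := by
    rw [Finset.sum_sub_distrib, Finset.sum_add_distrib]
    simp [Finset.card_univ]
  rw [hexp]
  have hZ := congrArg (Nat.cast : ℕ → ℤ) hm
  push_cast at hZ
  linarith

include hnomix in
lemma part3_aux (hφ : ∀ i, φ i ≠ 0) (hμ : ∀ i, μ i ≠ 0)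
    (hf : IsPFeynman φ μ l f) (hnz : ∀ i, ∀ p ∈ l i, p.2 ≠ 0) :
    (∏ g ∈ Finset.univ.filter fun g : PGerm n1 n2 n l => 0 < pidx φ μ l g, pidx φ μ l g)
      = (∏ i, |φ i|) * (∏ i, |μ i|) * ∏ e : PCEdge φ μ l f, pidx φ μ l e.val := by
  rw [Finset.prod_filter]
  rw [Fintype.prod_sum_type]
  rw [prod_ig φ μ l f hnomix hf hnz
    (fun ip => if 0 < pidx φ μ l (Sum.inr ip) then pidx φ μ l (Sum.inr ip) else 1)]
  have hT1 : (∏ e : PCEdge φ μ l f,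
      if 0 < pidx φ μ l (Sum.inr (gam φ μ l f hnomix (.inl e)))
        then pidx φ μ l (Sum.inr (gam φ μ l f hnomix (.inl e))) else 1)
      = ∏ e : PCEdge φ μ l f, pidx φ μ l e.val := by
    refine Finset.prod_congr rfl fun e _ => ?_
    rw [inr_gam_inl, if_pos e.prop.2.2]
  have hT2 : (∏ e : PCEdge φ μ l f,
      if 0 < pidx φ μ l (Sum.inr (gam φ μ l f hnomix (.inr (.inl e))))
        then pidx φ μ l (Sum.inr (gam φ μ l f hnomix (.inr (.inl e)))) else 1) = 1 := by
    refine Finset.prod_eq_one fun e _ => ?_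
    rw [inr_gam_inrl, (hf.2 e.val).1, if_neg]
    have := e.prop.2.2
    omega
  have hT3 : (∏ j : Fin n1 ⊕ Fin n2,
      if 0 < pidx φ μ l (Sum.inr (gam φ μ l f hnomix (.inr (.inr j))))
        then pidx φ μ l (Sum.inr (gam φ μ l f hnomix (.inr (.inr j)))) else 1)
      = ∏ j : Fin n1 ⊕ Fin n2,
        (if 0 < fdMark φ μ j then fdMark φ μ j else 1) := by
    refine Finset.prod_congr rfl fun j _ => ?_
    rw [inr_gam_inrr, (hf.2 (Sum.inl j)).1]
    have : pidx φ μ l (Sum.inl j : PGerm n1 n2 n l) = -(fdMark φ μ j) := rfl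
    rw [this, neg_neg]
  have hB : (∏ j : Fin n1 ⊕ Fin n2,
      if 0 < pidx φ μ l (Sum.inl j : PGerm n1 n2 n l)
        then pidx φ μ l (Sum.inl j : PGerm n1 n2 n l) else 1)
      = ∏ j : Fin n1 ⊕ Fin n2,
        (if 0 < -(fdMark φ μ j) then -(fdMark φ μ j) else 1) := by
    refine Finset.prod_congr rfl fun j _ => rfl
  rw [hT1, hT2, hT3, hB, mul_one]
  have hcomb : (∏ j : Fin n1 ⊕ Fin n2, (if 0 < -(fdMark φ μ j) then -(fdMark φ μ j) else 1))
      * (∏ j : Fin n1 ⊕ Fin n2, (if 0 < fdMark φ μ j then fdMark φ μ j else 1))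
      = ∏ j : Fin n1 ⊕ Fin n2, |fdMark φ μ j| := by
    rw [← Finset.prod_mul_distrib]
    refine Finset.prod_congr rfl fun j _ => ?_
    have hne : fdMark φ μ j ≠ 0 := by
      rcases j with j | j
      · exact hφ j
      · exact hμ j
    rcases lt_trichotomy (fdMark φ μ j) 0 with h | h | h
    · rw [if_pos (by omega), if_neg (by omega), mul_one, abs_of_neg h]
    · exact absurd h hne
    · rw [if_neg (by omega), if_pos h, one_mul, abs_of_pos h]
  have hsplit : (∏ j : Fin n1 ⊕ Fin n2, |fdMark φ μ j|)
      = (∏ i, |φ i|) * (∏ i, |μ i|) := by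
    rw [Fintype.prod_sum_type]
    rfl
  calc (∏ j : Fin n1 ⊕ Fin n2, (if 0 < -(fdMark φ μ j) then -(fdMark φ μ j) else 1))
      * ((∏ e : PCEdge φ μ l f, pidx φ μ l e.val)
        * ∏ j : Fin n1 ⊕ Fin n2, (if 0 < fdMark φ μ j then fdMark φ μ j else 1))
      = ((∏ j : Fin n1 ⊕ Fin n2, (if 0 < -(fdMark φ μ j) then -(fdMark φ μ j) else 1))
        * ∏ j : Fin n1 ⊕ Fin n2, (if 0 < fdMark φ μ j then fdMark φ μ j else 1))
        * ∏ e : PCEdge φ μ l f, pidx φ μ l e.val := by ring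
    _ = (∏ i, |φ i|) * (∏ i, |μ i|) * ∏ e : PCEdge φ μ l f, pidx φ μ l e.val := by
        rw [hcomb, hsplit]


section Converse

variable {n1' n2' nn : ℕ} (φ : Fin n1' → ℤ) (μ : Fin n2' → ℤ) (D : FloorData n1' n2')
  (hn : D.n = nn)

abbrev Desc : Type := (D.E × Bool) ⊕ (Fin n1' ⊕ Fin n2')

def dvtx : Desc D → Fin nn
  | .inl (e, true) => Fin.cast hn (D.src e)
  | .inl (e, false) => Fin.cast hn (D.tgt e)
  | .inr j => Fin.cast hn (D.endv j)

def ddat : Desc D → Bool × ℤ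
  | .inl (e, true) => (!(D.thickAtSrc e), D.w e)
  | .inl (e, false) => (D.thickAtSrc e, -(D.w e))
  | .inr j => (j.isLeft, fdMark φ μ j)

lemma ddat_ne (hw : ∀ e, 0 < D.w e) (hmk : ∀ j, fdMark φ μ j ≠ 0) (d : Desc D) :
    (ddat φ μ D d).2 ≠ 0 := by
  rcases d with ⟨e, b⟩ | j
  · cases b
    · have := hw e; simp [ddat]; omega
    · have := hw e; simp [ddat]; omega
  · exact hmk j

noncomputable def dl (i : Fin nn) : List (Desc D) :=
  (Finset.univ.filter fun d : Desc D =>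
      dvtx D hn d = i ∧ (ddat φ μ D d).2 < 0).toList
  ++ (Finset.univ.filter fun d : Desc D =>
      dvtx D hn d = i ∧ 0 < (ddat φ μ D d).2).toList

/-- The interior monomials reconstructed from `D`. -/
noncomputable def lc (i : Fin nn) : List (Bool × ℤ) := (dl φ μ D hn i).map (ddat φ μ D)

lemma mem_dl (hw : ∀ e, 0 < D.w e) (hmk : ∀ j, fdMark φ μ j ≠ 0)
    {d : Desc D} {i : Fin nn} :
    d ∈ dl φ μ D hn i ↔ dvtx D hn d = i := by
  simp only [dl, List.mem_append, Finset.mem_toList, Finset.mem_filter, Finset.mem_univ,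
    true_and]
  constructor
  · rintro (⟨h, -⟩ | ⟨h, -⟩) <;> exact h
  · intro h
    have := ddat_ne φ μ D hw hmk d
    rcases lt_trichotomy ((ddat φ μ D d).2) 0 with h' | h' | h'
    · exact Or.inl ⟨h, h'⟩
    · exact absurd h' this
    · exact Or.inr ⟨h, h'⟩

lemma nodup_dl (i : Fin nn) : (dl φ μ D hn i).Nodup := by
  refine List.Nodup.append (Finset.nodup_toList _) (Finset.nodup_toList _) ?_
  intro d h1 h2
  simp only [Finset.mem_toList, Finset.mem_filter] at h1 h2
  exact absurd h2.2.2 (by omega)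

noncomputable def theta : IG (lc φ μ D hn) → Desc D := fun ip =>
  (dl φ μ D hn ip.1).get ⟨ip.2.1, by simpa [lc] using ip.2.isLt⟩

lemma theta_mem (ip : IG (lc φ μ D hn)) :
    theta φ μ D hn ip ∈ dl φ μ D hn ip.1 := List.get_mem _ _

lemma dvtx_theta (hw : ∀ e, 0 < D.w e) (hmk : ∀ j, fdMark φ μ j ≠ 0)
    (ip : IG (lc φ μ D hn)) :
    dvtx D hn (theta φ μ D hn ip) = ip.1 :=
  (mem_dl φ μ D hn hw hmk).mp (theta_mem φ μ D hn ip)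

lemma gdat_lc (ip : IG (lc φ μ D hn)) :
    gdat (lc φ μ D hn) ip = ddat φ μ D (theta φ μ D hn ip) := by
  show (lc φ μ D hn ip.1).get ip.2 = _
  simp [lc, theta, List.get_eq_getElem, List.getElem_map]

lemma theta_bij (hw : ∀ e, 0 < D.w e) (hmk : ∀ j, fdMark φ μ j ≠ 0) :
    Function.Bijective (theta φ μ D hn) := by
  constructor
  · rintro ⟨i, p⟩ ⟨i', p'⟩ h
    have e1 := dvtx_theta φ μ D hn hw hmk ⟨i, p⟩
    have e2 := dvtx_theta φ μ D hn hw hmk ⟨i', p'⟩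
    have hi : i = i' := e1.symm.trans (by rw [h]; exact e2)
    subst hi
    have h2 := (List.Nodup.get_inj_iff (nodup_dl φ μ D hn i)).mp h
    have h3 := congrArg Fin.val h2
    have hp : p = p' := Fin.ext h3
    rw [hp]
  · intro d
    have hd : d ∈ dl φ μ D hn (dvtx D hn d) := (mem_dl φ μ D hn hw hmk).mpr rfl
    obtain ⟨m, hm⟩ := List.mem_iff_get.mp hd
    refine ⟨⟨dvtx D hn d, ⟨m.1, by simpa [lc] using m.isLt⟩⟩, ?_⟩
    show (dl φ μ D hn (dvtx D hn d)).get _ = d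
    rw [List.get_eq_getElem] at hm ⊢
    exact hm

noncomputable def dEq (hw : ∀ e, 0 < D.w e) (hmk : ∀ j, fdMark φ μ j ≠ 0) :
    IG (lc φ μ D hn) ≃ Desc D :=
  Equiv.ofBijective _ (theta_bij φ μ D hn hw hmk)

variable (hw : ∀ e, 0 < D.w e) (hmk : ∀ j, fdMark φ μ j ≠ 0)

lemma dEq_apply (ip : IG (lc φ μ D hn)) :
    dEq φ μ D hn hw hmk ip = theta φ μ D hn ip := rfl

lemma fst_dEq_symm (d : Desc D) :
    ((dEq φ μ D hn hw hmk).symm d).1 = dvtx D hn d := by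
  conv_rhs => rw [← Equiv.apply_symm_apply (dEq φ μ D hn hw hmk) d]
  rw [dEq_apply, dvtx_theta φ μ D hn hw hmk]

/-- The reconstructed Feynman matching. -/
noncomputable def fprime : PGerm n1' n2' nn (lc φ μ D hn) → PGerm n1' n2' nn (lc φ μ D hn) :=
  fun g => Sum.elim
    (fun j => Sum.inr ((dEq φ μ D hn hw hmk).symm (Sum.inr j)))
    (fun ip => Sum.elim
      (fun eb => Sum.inr ((dEq φ μ D hn hw hmk).symm (Sum.inl (eb.1, !eb.2))))
      (fun j => Sum.inl j)
      (dEq φ μ D hn hw hmk ip)) g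

lemma fprime_inl (j : Fin n1' ⊕ Fin n2') :
    fprime φ μ D hn hw hmk (Sum.inl j)
      = Sum.inr ((dEq φ μ D hn hw hmk).symm (Sum.inr j)) := rfl

lemma fprime_inr_edge (ip : IG (lc φ μ D hn)) (e : D.E) (b : Bool)
    (h : dEq φ μ D hn hw hmk ip = Sum.inl (e, b)) :
    fprime φ μ D hn hw hmk (Sum.inr ip)
      = Sum.inr ((dEq φ μ D hn hw hmk).symm (Sum.inl (e, !b))) := by
  show Sum.elim _ _ (dEq φ μ D hn hw hmk ip) = _
  rw [h]
  rfl

lemma fprime_inr_end (ip : IG (lc φ μ D hn)) (j : Fin n1' ⊕ Fin n2')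
    (h : dEq φ μ D hn hw hmk ip = Sum.inr j) :
    fprime φ μ D hn hw hmk (Sum.inr ip) = Sum.inl j := by
  show Sum.elim _ _ (dEq φ μ D hn hw hmk ip) = _
  rw [h]
  rfl

lemma pidx_lc_inr (ip : IG (lc φ μ D hn)) :
    pidx φ μ (lc φ μ D hn) (Sum.inr ip : PGerm n1' n2' nn (lc φ μ D hn))
      = (ddat φ μ D (theta φ μ D hn ip)).2 :=
  congrArg Prod.snd (gdat_lc φ μ D hn ip)

lemma ptypA_lc_inr (ip : IG (lc φ μ D hn)) :
    ptypA (lc φ μ D hn) (Sum.inr ip : PGerm n1' n2' nn (lc φ μ D hn))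
      = (ddat φ μ D (theta φ μ D hn ip)).1 :=
  congrArg Prod.fst (gdat_lc φ μ D hn ip)


lemma fprime_invol : Function.Involutive (fprime φ μ D hn hw hmk) := by
  intro g
  rcases g with j | ip
  · rw [fprime_inl]
    rw [fprime_inr_end φ μ D hn hw hmk _ j (Equiv.apply_symm_apply _ _)]
  · rcases hd : dEq φ μ D hn hw hmk ip with ⟨e, b⟩ | j
    · rw [fprime_inr_edge φ μ D hn hw hmk ip e b hd]
      rw [fprime_inr_edge φ μ D hn hw hmk _ e (!b) (Equiv.apply_symm_apply _ _)]
      rw [Bool.not_not, ← hd, Equiv.symm_apply_apply]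
    · rw [fprime_inr_end φ μ D hn hw hmk ip j hd, fprime_inl, ← hd,
        Equiv.symm_apply_apply]

lemma fprime_feynman (hlt : ∀ e, D.src e < D.tgt e) :
    IsPFeynman φ μ (lc φ μ D hn) (fprime φ μ D hn hw hmk) := by
  refine ⟨fprime_invol φ μ D hn hw hmk, ?_⟩
  intro g
  rcases g with j | ip
  · rw [fprime_inl]
    have ht : theta φ μ D hn ((dEq φ μ D hn hw hmk).symm (Sum.inr j)) = Sum.inr j :=
      Equiv.apply_symm_apply (dEq φ μ D hn hw hmk) _
    refine ⟨?_, ?_, ?_⟩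
    · rw [pidx_lc_inr, ht]
      show fdMark φ μ j = -(-(fdMark φ μ j))
      rw [neg_neg]
    · intro hpos
      have hm : fdMark φ μ j < 0 := by
        have h0 : pidx φ μ (lc φ μ D hn) (Sum.inl j : PGerm n1' n2' nn (lc φ μ D hn))
            = -(fdMark φ μ j) := rfl
        rw [h0] at hpos
        omega
      simp only [pblk, hm, if_pos]
      omega
    · rw [ptypA_lc_inr, ht]
      rcases j with a | a <;> rfl
  · rcases hd : dEq φ μ D hn hw hmk ip with ⟨e, b⟩ | j
    · have ht1 : theta φ μ D hn ip = Sum.inl (e, b) := hd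
      have ht2 : theta φ μ D hn
          ((dEq φ μ D hn hw hmk).symm (Sum.inl (e, !b))) = Sum.inl (e, !b) :=
        Equiv.apply_symm_apply (dEq φ μ D hn hw hmk) _
      rw [fprime_inr_edge φ μ D hn hw hmk ip e b hd]
      refine ⟨?_, ?_, ?_⟩
      · rw [pidx_lc_inr, pidx_lc_inr, ht1, ht2]
        cases b <;> simp [ddat]
      · intro hpos
        rw [pidx_lc_inr, ht1] at hpos
        have hb : b = true := by
          cases b
          · exfalso
            have := hw e
            simp [ddat] at hpos
            omega
          · rfl
        subst hb
        have h1 : (ip.1 : ℕ) = (D.src e : ℕ) := by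
          rw [← dvtx_theta φ μ D hn hw hmk ip, ht1]
          rfl
        have h2 : (((dEq φ μ D hn hw hmk).symm (Sum.inl (e, !true))).1 : ℕ)
            = (D.tgt e : ℕ) := by
          rw [fst_dEq_symm]
          rfl
        simp only [pblk]
        have h3 := hlt e
        rw [Fin.lt_def] at h3
        omega
      · rw [ptypA_lc_inr, ptypA_lc_inr, ht1, ht2]
        cases b <;> simp [ddat]
    · have ht1 : theta φ μ D hn ip = Sum.inr j := hd
      rw [fprime_inr_end φ μ D hn hw hmk ip j hd]
      refine ⟨?_, ?_, ?_⟩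
      · rw [pidx_lc_inr, ht1]
        rfl
      · intro hpos
        rw [pidx_lc_inr, ht1] at hpos
        have hm : 0 < fdMark φ μ j := hpos
        have hnlt : ¬ (fdMark φ μ j < 0) := by omega
        simp only [pblk, if_neg hnlt]
        have h4 := ip.1.isLt
        omega
      · rw [ptypA_lc_inr, ht1]
        rcases j with a | a <;> rfl


include hw hmk in
lemma lc_nz (i : Fin nn) : ∀ p ∈ lc φ μ D hn i, p.2 ≠ 0 := by
  intro p hp
  rw [lc, List.mem_map] at hp
  obtain ⟨d, -, rfl⟩ := hp
  exact ddat_ne φ μ D hw hmk d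

include hw hmk in
lemma lc_pairwise (i : Fin nn) :
    (lc φ μ D hn i).Pairwise fun x y => ¬(0 < x.2 ∧ y.2 < 0) := by
  have hA : ∀ p ∈ (Finset.univ.filter fun d : Desc D =>
      dvtx D hn d = i ∧ (ddat φ μ D d).2 < 0).toList.map (ddat φ μ D), p.2 < 0 := by
    intro p hp
    rw [List.mem_map] at hp
    obtain ⟨d, hd, rfl⟩ := hp
    rw [Finset.mem_toList, Finset.mem_filter] at hd
    exact hd.2.2
  have hB : ∀ p ∈ (Finset.univ.filter fun d : Desc D =>
      dvtx D hn d = i ∧ 0 < (ddat φ μ D d).2).toList.map (ddat φ μ D), 0 < p.2 := by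
    intro p hp
    rw [List.mem_map] at hp
    obtain ⟨d, hd, rfl⟩ := hp
    rw [Finset.mem_toList, Finset.mem_filter] at hd
    exact hd.2.2
  rw [lc, dl, List.map_append]
  rw [List.pairwise_append]
  refine ⟨List.pairwise_of_forall_mem_list fun a ha b hb => ?_,
    List.pairwise_of_forall_mem_list fun a ha b hb => ?_,
    fun a ha b hb => ?_⟩
  · have := hA a ha
    omega
  · have := hB b hb
    omega
  · have := hA a ha
    omega

include hw hmk in
lemma sum_desc {M : Type} [AddCommMonoid M] (F : Desc D → M) (i : Fin nn) :
    ((dl φ μ D hn i).map F).sum = ∑ d : Desc D, if dvtx D hn d = i then F d else 0 := by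
  rw [dl, List.map_append, List.sum_append, Finset.sum_map_toList, Finset.sum_map_toList]
  rw [Finset.sum_filter, Finset.sum_filter, ← Finset.sum_add_distrib]
  refine Finset.sum_congr rfl fun d _ => ?_
  have hd := ddat_ne φ μ D hw hmk d
  by_cases h1 : dvtx D hn d = i
  · rcases lt_trichotomy ((ddat φ μ D d).2) 0 with h2 | h2 | h2
    · rw [if_pos ⟨h1, h2⟩, if_neg (fun hc => lt_asymm h2 hc.2), if_pos h1, add_zero]
    · exact absurd h2 hd
    · rw [if_neg (fun hc => lt_asymm h2 hc.2), if_pos ⟨h1, h2⟩, if_pos h1, zero_add]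
  · rw [if_neg (fun hc => h1 hc.1), if_neg (fun hc => h1 hc.1), if_neg h1, add_zero]

lemma cast_eq_iff (x : Fin D.n) (i : Fin nn) :
    Fin.cast hn x = i ↔ x = Fin.cast hn.symm i := by
  rw [Fin.ext_iff, Fin.ext_iff]
  rfl

include hw hmk in
lemma lc_sum (k : ℕ) (hpre : IsPreFloorDiagram k φ μ D) (i : Fin nn) :
    ((lc φ μ D hn i).map Prod.snd).sum
      = -(k : ℤ) * (D.sv (Fin.cast hn.symm i) : ℤ) := by
  rw [lc, List.map_map, sum_desc φ μ D hn hw hmk]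
  have hc5 := hpre.2.2.2.2 (Fin.cast hn.symm i)
  rw [Fintype.sum_sum_type, Fintype.sum_prod_type]
  have hbool : ∀ e : D.E,
      (∑ b : Bool, if dvtx D hn (Sum.inl (e, b)) = i
        then (Prod.snd ∘ ddat φ μ D) (Sum.inl (e, b)) else 0)
      = (if D.src e = Fin.cast hn.symm i then D.w e else 0)
        + (if D.tgt e = Fin.cast hn.symm i then -(D.w e) else 0) := by
    intro e
    rw [Fintype.sum_bool]
    simp only [dvtx, ddat, Function.comp_apply]
    simp only [cast_eq_iff D hn]
  rw [Finset.sum_congr rfl fun e _ => hbool e]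
  have hend : ∀ j : Fin n1' ⊕ Fin n2',
      (if dvtx D hn (Sum.inr j) = i then (Prod.snd ∘ ddat φ μ D) (Sum.inr j) else 0)
      = if D.endv j = Fin.cast hn.symm i then fdMark φ μ j else 0 := by
    intro j
    simp only [dvtx, ddat, Function.comp_apply]
    simp only [cast_eq_iff D hn]
  rw [Finset.sum_congr rfl fun j _ => hend j]
  rw [Finset.sum_add_distrib]
  have hneg : ∀ e : D.E,
      (if D.tgt e = Fin.cast hn.symm i then -(D.w e) else 0)
      = -(if D.tgt e = Fin.cast hn.symm i then D.w e else 0) := by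
    intro e; split <;> simp
  rw [Finset.sum_congr rfl fun e _ => hneg e, Finset.sum_neg_distrib]
  rw [← Finset.sum_filter, ← Finset.sum_filter, ← Finset.sum_filter]
  linarith [hc5]

include hw hmk in
lemma lc_count (k : ℕ) (hpre : IsPreFloorDiagram k φ μ D) (i : Fin nn) :
    ((lc φ μ D hn i).filter fun p => !p.1).length
      + 2 * D.sv (Fin.cast hn.symm i) + D.gv (Fin.cast hn.symm i)
      = D.kv (Fin.cast hn.symm i) + 2 := by
  have hc4 := hpre.2.2.2.1 (Fin.cast hn.symm i)
  have hlen : ((lc φ μ D hn i).filter fun p => !p.1).length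
      = ∑ d : Desc D, if dvtx D hn d = i ∧ (ddat φ μ D d).1 = false then (1:ℕ) else 0 := by
    rw [← count_aux (fun p => !p.1) (lc φ μ D hn i), lc, List.map_map,
      sum_desc φ μ D hn hw hmk]
    refine Finset.sum_congr rfl fun d _ => ?_
    by_cases h1 : dvtx D hn d = i
    · by_cases h2 : (ddat φ μ D d).1 = false
      · rw [if_pos h1, if_pos ⟨h1, h2⟩]
        simp [Function.comp, h2]
      · rw [if_pos h1, if_neg (fun hc => h2 hc.2)]
        simp only [Bool.not_eq_false] at h2
        simp [Function.comp, h2]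
    · rw [if_neg h1, if_neg (fun hc => h1 hc.1)]
  rw [hlen]
  rw [Fintype.sum_sum_type, Fintype.sum_prod_type]
  have hbool : ∀ e : D.E,
      (∑ b : Bool, if dvtx D hn (Sum.inl (e, b)) = i
        ∧ (ddat φ μ D (Sum.inl (e, b))).1 = false then (1:ℕ) else 0)
      = if (if D.thickAtSrc e then D.src e else D.tgt e) = Fin.cast hn.symm i
        then 1 else 0 := by
    intro e
    rw [Fintype.sum_bool]
    simp only [dvtx, ddat]
    by_cases hth : D.thickAtSrc e = true
    · simp only [hth]
      simp
      exact if_congr (cast_eq_iff D hn (D.src e) i) rfl rfl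
    · simp only [Bool.not_eq_true] at hth
      simp only [hth]
      simp
      exact if_congr (cast_eq_iff D hn (D.tgt e) i) rfl rfl
  rw [Finset.sum_congr rfl fun e _ => hbool e]
  have hend : (∑ j : Fin n1' ⊕ Fin n2',
      if dvtx D hn (Sum.inr j) = i ∧ (ddat φ μ D (Sum.inr j)).1 = false
        then (1:ℕ) else 0)
      = (Finset.univ.filter fun j : Fin n2' =>
          D.endv (Sum.inr j) = Fin.cast hn.symm i).card := by
    rw [Fintype.sum_sum_type]
    have h1 : (∑ a : Fin n1', if dvtx D hn (Sum.inr (Sum.inl a)) = i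
        ∧ (ddat φ μ D (Sum.inr (Sum.inl a))).1 = false then (1:ℕ) else 0) = 0 := by
      refine Finset.sum_eq_zero fun a _ => ?_
      rw [if_neg (fun hc => by simpa [ddat] using hc.2)]
    have h2 : ∀ b : Fin n2', (if dvtx D hn (Sum.inr (Sum.inr b)) = i
        ∧ (ddat φ μ D (Sum.inr (Sum.inr b))).1 = false then (1:ℕ) else 0)
        = if D.endv (Sum.inr b) = Fin.cast hn.symm i then 1 else 0 := by
      intro b
      simp only [dvtx, ddat]
      exact if_congr (Iff.trans (and_iff_left rfl)
        (cast_eq_iff D hn (D.endv (Sum.inr b)) i)) rfl rfl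
    rw [h1, zero_add, Finset.sum_congr rfl fun b _ => h2 b, Finset.card_filter]
  rw [hend, ← Finset.card_filter]
  exact hc4


noncomputable def toE (e : D.E) :
    PCEdge φ μ (lc φ μ D hn) (fprime φ μ D hn hw hmk) :=
  ⟨Sum.inr ((dEq φ μ D hn hw hmk).symm (Sum.inl (e, true))), rfl, by
      rw [fprime_inr_edge φ μ D hn hw hmk _ e true (Equiv.apply_symm_apply _ _)]
      rfl, by
      rw [pidx_lc_inr]
      have ht : theta φ μ D hn ((dEq φ μ D hn hw hmk).symm (Sum.inl (e, true)))
          = Sum.inl (e, true) := Equiv.apply_symm_apply (dEq φ μ D hn hw hmk) _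
      rw [ht]
      exact hw e⟩

lemma toE_bij : Function.Bijective (toE φ μ D hn hw hmk) := by
  constructor
  · intro e e' h
    have h2 := congrArg Subtype.val h
    have h3 := Sum.inr_injective h2
    have h4 := (dEq φ μ D hn hw hmk).symm.injective h3
    have h5 := Sum.inl_injective h4
    exact congrArg Prod.fst h5
  · intro c
    obtain ⟨hr1, hr2, hpos⟩ := c.prop
    rcases hv : c.val with j | ip
    · rw [hv] at hr1; simp at hr1
    · rcases hd : dEq φ μ D hn hw hmk ip with ⟨e, b⟩ | j
      · have hb : b = true := by
          cases b
          · exfalso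
            rw [hv, pidx_lc_inr] at hpos
            have ht : theta φ μ D hn ip = Sum.inl (e, false) := hd
            rw [ht] at hpos
            have := hw e
            simp [ddat] at hpos
            omega
          · rfl
        subst hb
        refine ⟨e, ?_⟩
        apply Subtype.ext
        show Sum.inr ((dEq φ μ D hn hw hmk).symm (Sum.inl (e, true))) = c.val
        rw [hv, ← hd, Equiv.symm_apply_apply]
      · exfalso
        rw [hv, fprime_inr_end φ μ D hn hw hmk ip j hd] at hr2
        simp at hr2

noncomputable def eqE :
    PCEdge φ μ (lc φ μ D hn) (fprime φ μ D hn hw hmk) ≃ D.E :=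
  (Equiv.ofBijective _ (toE_bij φ μ D hn hw hmk)).symm

lemma toE_eqE (c : PCEdge φ μ (lc φ μ D hn) (fprime φ μ D hn hw hmk)) :
    toE φ μ D hn hw hmk (eqE φ μ D hn hw hmk c) = c :=
  Equiv.apply_symm_apply (Equiv.ofBijective _ (toE_bij φ μ D hn hw hmk)) c

lemma toE_spec (e : D.E) :
    ((D.src e : ℕ) = pvtx (lc φ μ D hn) (toE φ μ D hn hw hmk e).val) ∧
    ((D.tgt e : ℕ)
      = pvtx (lc φ μ D hn) (fprime φ μ D hn hw hmk (toE φ μ D hn hw hmk e).val)) ∧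
    (D.w e = pidx φ μ (lc φ μ D hn) (toE φ μ D hn hw hmk e).val) ∧
    (D.thickAtSrc e = ! ptypA (lc φ μ D hn) (toE φ μ D hn hw hmk e).val) := by
  have ht : theta φ μ D hn ((dEq φ μ D hn hw hmk).symm (Sum.inl (e, true)))
      = Sum.inl (e, true) := Equiv.apply_symm_apply (dEq φ μ D hn hw hmk) _
  refine ⟨?_, ?_, ?_, ?_⟩
  · exact (congrArg Fin.val (fst_dEq_symm φ μ D hn hw hmk (Sum.inl (e, true)))).symm
  · rw [show (toE φ μ D hn hw hmk e).val
        = Sum.inr ((dEq φ μ D hn hw hmk).symm (Sum.inl (e, true))) from rfl,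
      fprime_inr_edge φ μ D hn hw hmk _ e true (Equiv.apply_symm_apply _ _)]
    exact (congrArg Fin.val (fst_dEq_symm φ μ D hn hw hmk (Sum.inl (e, !true)))).symm
  · show D.w e = pidx φ μ (lc φ μ D hn)
      (Sum.inr ((dEq φ μ D hn hw hmk).symm (Sum.inl (e, true))))
    rw [pidx_lc_inr, ht]
    rfl
  · show D.thickAtSrc e = ! ptypA (lc φ μ D hn)
      (Sum.inr ((dEq φ μ D hn hw hmk).symm (Sum.inl (e, true))))
    rw [ptypA_lc_inr, ht]
    exact (Bool.not_not _).symm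

lemma pmatches_conv (gg ss kk : Fin nn → ℕ)
    (hdec : ∀ i : Fin nn, D.gv (Fin.cast hn.symm i) = gg i ∧
      D.sv (Fin.cast hn.symm i) = ss i ∧ D.kv (Fin.cast hn.symm i) = kk i) :
    PMatches φ μ gg ss kk (lc φ μ D hn) (fprime φ μ D hn hw hmk) D := by
  refine ⟨hn, hdec, fun j => ?_, eqE φ μ D hn hw hmk, fun c => ?_⟩
  · rw [fprime_inl]
    exact (congrArg Fin.val (fst_dEq_symm φ μ D hn hw hmk (Sum.inr j))).symm
  · have hc := toE_eqE φ μ D hn hw hmk c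
    have hspec := toE_spec φ μ D hn hw hmk (eqE φ μ D hn hw hmk c)
    rw [hc] at hspec
    exact ⟨hspec.1, hspec.2.1, hspec.2.2.1, hspec.2.2.2⟩

end Converse

end FGFD

/-- Fix `k`, sequences `φ`, `μ` of nonzero integers, decorations
`(kk i, ss i, gg i)`, and interior normally ordered monomials `l i` with nonzero indices
summing to `-k·ss i` and with exactly `kk i + 2 - 2·ss i - gg i` factors of `b`-type.
Let `f` be a Feynman graph for the product `P` so determined, in which no germ of `m_+` is
matched with a germ of `m_-`.  Then:
(1) the decorated graph constructed from `f` is a possibly disconnected floor diagram for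
`𝔽_k` of degree `(φ,μ)`;
(2) its genus `#CE - n + 1 + Σ gg i` equals `Σ_i (gg i + h i - 1) + 1 - ℓ`, where `h i` is
the number of factors of `m_i` with negative index and `ℓ` is the number of factors of `m_+`;
(3) the weight of `f` (the product of the indices of all right-directed germs) equals
`∏|φ i| · ∏|μ i| · ∏_e w(e)`, the last product being over the compact edges;
(4) conversely, every possibly disconnected floor diagram for `𝔽_k` of degree `(φ,μ)` whose
`i`-th vertex carries the decorations `(gg i, ss i, kk i)` arises by this construction from
such interior monomials `l'` and such a Feynman graph `f'`. -/
theorem feynman_graphs_are_floor_diagrams (k : ℕ) {n1 n2 n : ℕ}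
    (φ : Fin n1 → ℤ) (μ : Fin n2 → ℤ) (hφ : ∀ i, φ i ≠ 0) (hμ : ∀ i, μ i ≠ 0)
    (kk ss gg : Fin n → ℕ) (l : Fin n → List (Bool × ℤ))
    (hnz : ∀ i, ∀ p ∈ l i, p.2 ≠ 0)
    (hnormal : ∀ i, (l i).Pairwise fun x y => ¬(0 < x.2 ∧ y.2 < 0))
    (hsum : ∀ i, ((l i).map Prod.snd).sum = -(k : ℤ) * (ss i : ℤ))
    (hb : ∀ i, ((l i).filter fun p => !p.1).length + 2 * ss i + gg i = kk i + 2)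
    (f : PGerm n1 n2 n l → PGerm n1 n2 n l) (hf : IsPFeynman φ μ l f)
    (hnomix : ∀ j : Fin n1 ⊕ Fin n2, (f (Sum.inl j)).isRight = true) :
    -- (1)
    (∃ D : FloorData n1 n2, PMatches φ μ gg ss kk l f D ∧ IsPreFloorDiagram k φ μ D) ∧
    -- (2)
    ((Fintype.card (PCEdge φ μ l f) : ℤ) - (n : ℤ) + 1 + ∑ i, (gg i : ℤ)
      = (∑ i, ((gg i : ℤ) + (((l i).filter fun p => decide (p.2 < 0)).length : ℤ) - 1))
        + 1
        - ((Finset.univ.filter fun j : Fin n1 ⊕ Fin n2 => fdMark φ μ j < 0).card : ℤ)) ∧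
    -- (3)
    ((∏ g ∈ Finset.univ.filter fun g : PGerm n1 n2 n l => 0 < pidx φ μ l g, pidx φ μ l g)
      = (∏ i, |φ i|) * (∏ i, |μ i|) * ∏ e : PCEdge φ μ l f, pidx φ μ l e.val) ∧
    -- (4)
    (∀ D : FloorData n1 n2, IsPreFloorDiagram k φ μ D →
      (∃ hn : D.n = n, ∀ i : Fin n, D.gv (Fin.cast hn.symm i) = gg i ∧
        D.sv (Fin.cast hn.symm i) = ss i ∧ D.kv (Fin.cast hn.symm i) = kk i) →
      ∃ (l' : Fin n → List (Bool × ℤ))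
        (f' : PGerm n1 n2 n l' → PGerm n1 n2 n l'),
        (∀ i, ∀ p ∈ l' i, p.2 ≠ 0) ∧
        (∀ i, (l' i).Pairwise fun x y => ¬(0 < x.2 ∧ y.2 < 0)) ∧
        (∀ i, ((l' i).map Prod.snd).sum = -(k : ℤ) * (ss i : ℤ)) ∧
        (∀ i, ((l' i).filter fun p => !p.1).length + 2 * ss i + gg i = kk i + 2) ∧
        IsPFeynman φ μ l' f' ∧
        (∀ j : Fin n1 ⊕ Fin n2, (f' (Sum.inl j)).isRight = true) ∧
        PMatches φ μ gg ss kk l' f' D) := by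
  refine ⟨⟨FGFD.mkD φ μ l f hnomix gg ss kk,
      FGFD.mkD_matches φ μ l f hnomix gg ss kk,
      FGFD.mkD_ispre φ μ l f hnomix gg ss kk k hφ hμ hf hnz hsum hb⟩,
    FGFD.part2_aux φ μ l f hnomix gg hf hnz,
    FGFD.part3_aux φ μ l f hnomix hφ hμ hf hnz, ?_⟩
  intro D hpre hex
  obtain ⟨hn', hdec⟩ := hex
  have hw : ∀ e, 0 < D.w e := hpre.2.2.1
  have hmk : ∀ j, fdMark φ μ j ≠ 0 := hpre.1
  refine ⟨FGFD.lc φ μ D hn', FGFD.fprime φ μ D hn' hw hmk,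
    fun i => FGFD.lc_nz φ μ D hn' hw hmk i,
    fun i => FGFD.lc_pairwise φ μ D hn' hw hmk i,
    fun i => ?_, fun i => ?_,
    FGFD.fprime_feynman φ μ D hn' hw hmk hpre.2.1,
    fun j => rfl,
    FGFD.pmatches_conv φ μ D hn' hw hmk gg ss kk hdec⟩
  · rw [FGFD.lc_sum φ μ D hn' hw hmk k hpre i, (hdec i).2.1]
  · have h := FGFD.lc_count φ μ D hn' hw hmk k hpre i
    rw [(hdec i).1, (hdec i).2.1, (hdec i).2.2] at h
    exact h
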